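/- Among all rooted binary trees on n vertices, the tree T_{r,2}^n with exactly two vertices at every positive level minimizes the number of subtrees containing the root. -/

import Mathlib

open SimpleGraph Finset

/-- `G` is a rooted binary tree with root `r`: a tree in which the root has degree 2
(or the tree is a single vertex) and every non-root vertex has degree 1 or 3. -/
def IsRootedBinaryTree {V : Type*} [Fintype V] (G : SimpleGraph V) [DecidableRel G.Adj]
    (r : V) : Prop :=
  G.IsTree ∧ (Fintype.card V = 1 ∨ G.degree r = 2) ∧
    ∀ v : V, v ≠ r → G.degree v = 1 ∨ G.degree v = 3

/-- The height of a rooted tree: the maximum distance from the root to a vertex. -/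
noncomputable def treeHeight {V : Type*} [Fintype V] (G : SimpleGraph V) (r : V) : ℕ :=
  Finset.univ.sup (fun v => G.dist r v)

/-- Number of subtrees of `G` containing `x`. -/
noncomputable def numSubtrees {V : Type*} (G : SimpleGraph V) (x : V) : ℕ :=
  {S : Finset V | x ∈ S ∧ (G.induce (S : Set V)).Connected}.ncard

attribute [local instance] Classical.propDecidable

namespace TreeAux

variable {V : Type*} {T : SimpleGraph V}

/-- The unique path between two vertices of a tree. -/
noncomputable def tpath (hT : T.IsTree) (u v : V) : T.Walk u v :=
  (hT.existsUnique_path u v).choose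

lemma tpath_isPath (hT : T.IsTree) (u v : V) : (tpath hT u v).IsPath :=
  (hT.existsUnique_path u v).choose_spec.1

lemma tpath_unique (hT : T.IsTree) {u v : V} (p : T.Walk u v) (hp : p.IsPath) :
    p = tpath hT u v :=
  (hT.existsUnique_path u v).choose_spec.2 p hp

lemma tpath_self (hT : T.IsTree) (u : V) : tpath hT u u = Walk.nil :=
  (tpath_unique hT Walk.nil Walk.IsPath.nil).symm

lemma tpath_adj (hT : T.IsTree) {u v : V} (h : T.Adj u v) :
    tpath hT u v = Walk.cons h Walk.nil :=
  (tpath_unique hT (Walk.cons h Walk.nil) (by simp [Walk.cons_isPath_iff, h.ne])).symm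

lemma tpath_length (hT : T.IsTree) (u v : V) : (tpath hT u v).length = T.dist u v := by
  obtain ⟨p, hp, hl⟩ := hT.isConnected.exists_path_of_dist u v
  rw [tpath_unique hT p hp] at hl
  exact hl

lemma tpath_takeUntil (hT : T.IsTree) {u v y : V} (h : y ∈ (tpath hT u v).support) :
    tpath hT u y = (tpath hT u v).takeUntil y h :=
  (tpath_unique hT _ ((tpath_isPath hT u v).takeUntil h)).symm

/-- The branch at the neighbor `v` of `u`: all vertices whose path from `v` avoids `u`,
other than `u` itself. -/
noncomputable def branch (hT : T.IsTree) (u v : V) : Set V :=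
  {x | x ≠ u ∧ u ∉ (tpath hT v x).support}

lemma self_mem_branch (hT : T.IsTree) {u v : V} (h : T.Adj u v) : v ∈ branch hT u v := by
  refine ⟨h.ne', ?_⟩
  rw [tpath_self]
  simp [h.ne]

lemma not_mem_branch_self (hT : T.IsTree) (u v : V) : u ∉ branch hT u v := fun h => h.1 rfl

lemma tpath_eq_cons (hT : T.IsTree) {u v x : V} (h : T.Adj u v) (hx : x ∈ branch hT u v) :
    tpath hT u x = Walk.cons h (tpath hT v x) := by
  refine (tpath_unique hT _ ?_).symm
  rw [Walk.cons_isPath_iff]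
  exact ⟨tpath_isPath hT v x, hx.2⟩

lemma mem_support_of_mem_branch (hT : T.IsTree) {u v x : V} (h : T.Adj u v)
    (hx : x ∈ branch hT u v) : v ∈ (tpath hT u x).support := by
  rw [tpath_eq_cons hT h hx, Walk.support_cons]
  exact List.mem_cons_of_mem _ (Walk.start_mem_support _)

/-- Branch sets are closed under taking paths from `v`. -/
lemma branch_closed (hT : T.IsTree) {u v x y : V} (hx : x ∈ branch hT u v)
    (hy : y ∈ (tpath hT v x).support) : y = v ∨ y ∈ branch hT u v := by
  by_cases hyv : y = v
  · exact Or.inl hyv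
  refine Or.inr ⟨?_, ?_⟩
  · rintro rfl; exact hx.2 hy
  · rw [tpath_takeUntil hT hy]
    intro hu
    exact hx.2 (Walk.support_takeUntil_subset _ hy hu)

lemma branch_disjoint (hT : T.IsTree) {u v w x : V} (hv : T.Adj u v) (hw : T.Adj u w)
    (hxv : x ∈ branch hT u v) (hxw : x ∈ branch hT u w) : v = w := by
  have h1 := tpath_eq_cons hT hv hxv
  have h2 := tpath_eq_cons hT hw hxw
  have := h1.symm.trans h2
  have hs := congrArg Walk.support this
  rw [Walk.support_cons, Walk.support_cons, (tpath hT v x).support_eq_cons,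
    (tpath hT w x).support_eq_cons] at hs
  simp only [List.cons.injEq] at hs
  exact hs.2.1

/-- Every vertex other than `u` lies in some branch. -/
lemma exists_branch (hT : T.IsTree) {u x : V} (hx : x ≠ u) :
    ∃ v, T.Adj u v ∧ x ∈ branch hT u v ∧ v ∈ (tpath hT u x).support := by
  obtain ⟨w, h, p', hp'⟩ := Walk.exists_eq_cons_of_ne (Ne.symm hx) (tpath hT u x)
  have hpath := tpath_isPath hT u x
  rw [hp', Walk.cons_isPath_iff] at hpath
  have hxb : x ∈ branch hT u w := by
    refine ⟨hx, ?_⟩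
    rw [← tpath_unique hT p' hpath.1]
    exact hpath.2
  exact ⟨w, h, hxb, mem_support_of_mem_branch hT h hxb⟩

lemma branch_mono (hT : T.IsTree) {u v w : V} (huv : T.Adj u v) (hvw : T.Adj v w)
    (hwu : w ≠ u) : branch hT v w ⊆ branch hT u v := by
  intro x hx
  have hxw : u ∉ (tpath hT w x).support := by
    intro hu
    have hxu : x ≠ u := by
      rintro rfl
      -- then tpath v x = cons (tpath w x) and tpath v x = edge
      have h1 := tpath_eq_cons hT hvw hx
      have h2 := tpath_adj hT huv.symm
      have := h1.symm.trans h2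
      have hs := congrArg Walk.support this
      rw [Walk.support_cons, Walk.support_cons, Walk.support_nil,
        (tpath hT w x).support_eq_cons] at hs
      simp only [List.cons.injEq] at hs
      exact hwu hs.2.1
    -- u on path w → x, so tpath w u is a prefix avoiding v
    have hvu : v ∉ (tpath hT w u).support := by
      rw [tpath_takeUntil hT hu]
      intro hv
      exact hx.2 (Walk.support_takeUntil_subset _ hu hv)
    -- then cons (v~w) (tpath w u) is a path from v to u, but tpath v u is the edge
    have hne : u ≠ v := huv.ne
    have hp : (Walk.cons hvw (tpath hT w u)).IsPath := by
      rw [Walk.cons_isPath_iff]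
      exact ⟨tpath_isPath hT w u, hvu⟩
    have heq := (tpath_unique hT _ hp).trans (tpath_adj hT huv.symm)
    have hs := congrArg Walk.support heq
    rw [Walk.support_cons, Walk.support_cons, Walk.support_nil,
      (tpath hT w u).support_eq_cons] at hs
    simp only [List.cons.injEq] at hs
    exact hwu hs.2.1
  have hxu : x ≠ u := by
    rintro rfl
    exact hxw (Walk.end_mem_support _)
  have hbx : x ∈ branch hT u w := ⟨hxu, hxw⟩
  refine ⟨hxu, ?_⟩
  rw [tpath_eq_cons hT hvw hx, Walk.support_cons]
  intro hu
  rcases List.mem_cons.mp hu with h | h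
  · exact absurd h huv.ne
  · exact hxw h

end TreeAux

namespace TreeAux2
open TreeAux

variable {V : Type*} {T : SimpleGraph V}

/-- Neighbors of a non-root vertex of a branch stay in the branch. -/
lemma branch_adj_mem (hT : T.IsTree) {u v x z : V} (huv : T.Adj u v)
    (hx : x ∈ branch hT u v) (hxv : x ≠ v) (hz : T.Adj x z) : z ∈ branch hT u v := by
  have hzu : z ≠ u := by
    rintro rfl
    have h1 := tpath_eq_cons hT huv hx
    have h2 := tpath_adj hT hz.symm
    have hs := congrArg Walk.support (h2.symm.trans h1)
    rw [Walk.support_cons, Walk.support_cons, Walk.support_nil,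
      (tpath hT v x).support_eq_cons] at hs
    simp only [List.cons.injEq] at hs
    exact hxv hs.2.1
  by_cases hmem : z ∈ (tpath hT v x).support
  · refine ⟨hzu, ?_⟩
    rw [tpath_takeUntil hT hmem]
    intro hu
    exact hx.2 (Walk.support_takeUntil_subset _ hmem hu)
  · refine ⟨hzu, ?_⟩
    have hp : ((Walk.cons hz.symm (tpath hT v x).reverse).reverse : T.Walk v z).IsPath := by
      apply Walk.IsPath.reverse
      rw [Walk.cons_isPath_iff]
      refine ⟨(tpath_isPath hT v x).reverse, ?_⟩
      rw [Walk.support_reverse, List.mem_reverse]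
      exact hmem
    rw [← tpath_unique hT _ hp]
    intro hu
    rw [Walk.support_reverse, List.mem_reverse, Walk.support_cons, List.mem_cons] at hu
    rcases hu with h | h
    · exact hzu h.symm
    · rw [Walk.support_reverse, List.mem_reverse] at h
      exact hx.2 h

lemma branch_adj_root (hT : T.IsTree) {u v z : V} (huv : T.Adj u v) (hvz : T.Adj v z)
    (hzu : z ≠ u) : z ∈ branch hT u v :=
  branch_mono hT huv hvz hzu (self_mem_branch hT hvz)

/-- `S` is a subtree within region `R` rooted at `v`. -/
def closedIn (hT : T.IsTree) (v : V) (R S : Finset V) : Prop :=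
  v ∈ S ∧ S ⊆ R ∧ ∀ x ∈ S, ∀ y ∈ (tpath hT v x).support, y ∈ S

/-- Number of subtrees within region `R` rooted at `v`. -/
noncomputable def cnt (hT : T.IsTree) (v : V) (R : Finset V) : ℕ :=
  Nat.card {S : Finset V // closedIn hT v R S}

/-- `R` is a valid (path-closed) region rooted at `v`. -/
def vclosed (hT : T.IsTree) (v : V) (R : Finset V) : Prop :=
  v ∈ R ∧ ∀ x ∈ R, ∀ y ∈ (tpath hT v x).support, y ∈ R

/-- Neighbors of `x` within `R`. -/
noncomputable def nbr (T : SimpleGraph V) (x : V) (R : Finset V) : Finset V :=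
  R.filter (fun z => T.Adj x z)

/-- The part of `R` in the branch at `w`. -/
noncomputable def brFil (hT : T.IsTree) (R : Finset V) (v w : V) : Finset V :=
  R.filter (fun x => x ∈ branch hT v w)

lemma mem_nbr {T : SimpleGraph V} {x z : V} {R : Finset V} :
    z ∈ nbr T x R ↔ z ∈ R ∧ T.Adj x z := by simp [nbr]

lemma mem_brFil {hT : T.IsTree} {R : Finset V} {v w x : V} :
    x ∈ brFil hT R v w ↔ x ∈ R ∧ x ∈ branch hT v w := by simp [brFil]

lemma vclosed_brFil (hT : T.IsTree) {v w : V} {R : Finset V} (hvc : vclosed hT v R)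
    (hw : w ∈ nbr T v R) : vclosed hT w (brFil hT R v w) := by
  obtain ⟨hwR, hadj⟩ := mem_nbr.mp hw
  refine ⟨mem_brFil.mpr ⟨hwR, self_mem_branch hT hadj⟩, ?_⟩
  intro x hx y hy
  obtain ⟨hxR, hxb⟩ := mem_brFil.mp hx
  have hyb : y = w ∨ y ∈ branch hT v w := branch_closed hT hxb hy
  have hyR : y ∈ R := by
    refine hvc.2 x hxR y ?_
    rw [tpath_eq_cons hT hadj hxb, Walk.support_cons]
    exact List.mem_cons_of_mem _ hy
  rcases hyb with rfl | hyb
  · exact mem_brFil.mpr ⟨hyR, self_mem_branch hT hadj⟩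
  · exact mem_brFil.mpr ⟨hyR, hyb⟩

/-- Partition of a closed region into root and branches. -/
lemma region_eq (hT : T.IsTree) {v : V} {R : Finset V} (hvc : vclosed hT v R) :
    R = insert v ((nbr T v R).biUnion (fun w => brFil hT R v w)) := by
  ext x
  simp only [Finset.mem_insert, Finset.mem_biUnion]
  constructor
  · intro hx
    by_cases hxv : x = v
    · exact Or.inl hxv
    · obtain ⟨w, hadj, hxb, hws⟩ := exists_branch hT hxv
      have hwR : w ∈ R := hvc.2 x hx w hws
      exact Or.inr ⟨w, mem_nbr.mpr ⟨hwR, hadj⟩, mem_brFil.mpr ⟨hx, hxb⟩⟩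
  · rintro (rfl | ⟨w, _, hx⟩)
    · exact hvc.1
    · exact (mem_brFil.mp hx).1

lemma brFil_pairwise_disjoint (hT : T.IsTree) {v : V} (R : Finset V) :
    ∀ w₁ ∈ nbr T v R, ∀ w₂ ∈ nbr T v R, w₁ ≠ w₂ →
      Disjoint (brFil hT R v w₁) (brFil hT R v w₂) := by
  intro w₁ h₁ w₂ h₂ hne
  rw [Finset.disjoint_left]
  intro x hx₁ hx₂
  exact hne (branch_disjoint hT (mem_nbr.mp h₁).2 (mem_nbr.mp h₂).2
    (mem_brFil.mp hx₁).2 (mem_brFil.mp hx₂).2)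

lemma card_region (hT : T.IsTree) {v : V} {R : Finset V} (hvc : vclosed hT v R) :
    R.card = 1 + ∑ w ∈ nbr T v R, (brFil hT R v w).card := by
  have hvnot : v ∉ (nbr T v R).biUnion (fun w => brFil hT R v w) := by
    intro hv
    obtain ⟨w, _, hx⟩ := Finset.mem_biUnion.mp hv
    exact not_mem_branch_self hT v w (mem_brFil.mp hx).2
  conv_lhs => rw [region_eq hT hvc]
  rw [Finset.card_insert_of_notMem hvnot, Finset.card_biUnion (brFil_pairwise_disjoint hT R)]
  omega

end TreeAux2

namespace TreeAux3
open TreeAux TreeAux2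

variable {V : Type*} {T : SimpleGraph V}

lemma finite_closed {P : Finset V → Prop} {R : Finset V} (h : ∀ S, P S → S ⊆ R) :
    Finite {S : Finset V // P S} := by
  apply Finite.of_injective
    (fun S : {S : Finset V // P S} => (⟨S.1, Finset.mem_powerset.mpr (h _ S.2)⟩ : ↥R.powerset))
  intro a b hab
  simp only [Subtype.mk.injEq] at hab
  exact Subtype.ext hab

lemma finite_closedIn (hT : T.IsTree) (v : V) (R : Finset V) :
    Finite {S : Finset V // closedIn hT v R S} :=
  finite_closed (fun _ hS => hS.2.1)

lemma card_optClosed (hT : T.IsTree) (v : V) (R : Finset V) :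
    Nat.card {S : Finset V // S = ∅ ∨ closedIn hT v R S} = 1 + cnt hT v R := by
  have h1 : Finite {S : Finset V // closedIn hT v R S} := finite_closedIn hT v R
  have e : Option {S : Finset V // closedIn hT v R S} ≃
      {S : Finset V // S = ∅ ∨ closedIn hT v R S} := by
    refine Equiv.ofBijective
      (fun o => o.elim ⟨∅, Or.inl rfl⟩ (fun S => ⟨S.1, Or.inr S.2⟩)) ⟨?_, ?_⟩
    · rintro (_ | a) (_ | b) hab
      · rfl
      · exfalso
        have h : (∅ : Finset V) = ↑b := congrArg Subtype.val hab
        have hv := b.2.1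
        rw [← h] at hv
        exact Finset.notMem_empty v hv
      · exfalso
        have h : (↑a : Finset V) = ∅ := congrArg Subtype.val hab
        have hv := a.2.1
        rw [h] at hv
        exact Finset.notMem_empty v hv
      · simp only [Option.elim, Subtype.mk.injEq] at hab
        exact congrArg some (Subtype.ext hab)
    · rintro ⟨S, hS | hS⟩
      · exact ⟨none, Subtype.ext hS.symm⟩
      · exact ⟨some ⟨S, hS⟩, rfl⟩
  rw [← Nat.card_congr e]
  unfold cnt
  simp [Nat.card_eq_fintype_card]
  omega

/-- The key product formula for subtree counts. -/
lemma cnt_eq_prod (hT : T.IsTree) {v : V} {R : Finset V} (hvc : vclosed hT v R) :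
    cnt hT v R = ∏ w ∈ nbr T v R, (1 + cnt hT w (brFil hT R v w)) := by
  classical
  set s := nbr T v R with hs
  have hadjs : ∀ w : ↥s, T.Adj v ↑w := fun w => (mem_nbr.mp w.2).2
  -- the equivalence
  have e : {S : Finset V // closedIn hT v R S} ≃
      (∀ w : ↥s, {S : Finset V // S = ∅ ∨ closedIn hT w (brFil hT R v ↑w) S}) := by
    refine ⟨fun S w => ⟨S.1.filter (· ∈ branch hT v ↑w), ?_⟩,
      fun f => ⟨insert v (s.attach.biUnion fun w => (f w).1), ?_, ?_, ?_⟩, ?_, ?_⟩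
    · -- forward well-defined
      by_cases hemp : S.1.filter (· ∈ branch hT v ↑w) = ∅
      · exact Or.inl hemp
      obtain ⟨x, hx⟩ := Finset.nonempty_iff_ne_empty.mpr hemp
      rw [Finset.mem_filter] at hx
      refine Or.inr ⟨?_, ?_, ?_⟩
      · rw [Finset.mem_filter]
        exact ⟨S.2.2.2 x hx.1 ↑w (mem_support_of_mem_branch hT (hadjs w) hx.2),
          self_mem_branch hT (hadjs w)⟩
      · intro x' hx'
        rw [Finset.mem_filter] at hx'
        exact mem_brFil.mpr ⟨S.2.2.1 hx'.1, hx'.2⟩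
      · intro x' hx' y hy
        rw [Finset.mem_filter] at hx' ⊢
        have hyS : y ∈ S.1 := by
          refine S.2.2.2 x' hx'.1 y ?_
          rw [tpath_eq_cons hT (hadjs w) hx'.2, Walk.support_cons]
          exact List.mem_cons_of_mem _ hy
        rcases branch_closed hT hx'.2 hy with rfl | hyb
        · exact ⟨hyS, self_mem_branch hT (hadjs w)⟩
        · exact ⟨hyS, hyb⟩
    · exact Finset.mem_insert_self v _
    · -- subset of R
      intro x hx
      rcases Finset.mem_insert.mp hx with rfl | hx
      · exact hvc.1
      obtain ⟨w, _, hxw⟩ := Finset.mem_biUnion.mp hx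
      rcases (f w).2 with hemp | hcl
      · rw [hemp] at hxw; exact absurd hxw (Finset.notMem_empty x)
      · exact (mem_brFil.mp (hcl.2.1 hxw)).1
    · -- closedness of the union
      intro x hx y hy
      rcases Finset.mem_insert.mp hx with rfl | hx
      · rw [tpath_self hT] at hy
        simp only [Walk.support_nil, List.mem_singleton] at hy
        subst hy
        exact Finset.mem_insert_self _ _
      obtain ⟨w, hws, hxw⟩ := Finset.mem_biUnion.mp hx
      rcases (f w).2 with hemp | hcl
      · rw [hemp] at hxw; exact absurd hxw (Finset.notMem_empty x)
      have hxb : x ∈ branch hT v ↑w := (mem_brFil.mp (hcl.2.1 hxw)).2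
      rw [tpath_eq_cons hT (hadjs w) hxb, Walk.support_cons, List.mem_cons] at hy
      rcases hy with rfl | hy
      · exact Finset.mem_insert_self y _
      · refine Finset.mem_insert_of_mem (Finset.mem_biUnion.mpr ⟨w, hws, ?_⟩)
        exact hcl.2.2 x hxw y hy
    · -- left inverse
      intro S
      apply Subtype.ext
      ext x
      simp only [Finset.mem_insert, Finset.mem_biUnion, Finset.mem_filter]
      constructor
      · rintro (rfl | ⟨w, _, hxS, _⟩)
        · exact S.2.1
        · exact hxS
      · intro hxS
        by_cases hxv : x = v
        · exact Or.inl hxv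
        obtain ⟨w₀, hadj, hxb, hws⟩ := exists_branch hT hxv
        have hw₀R : w₀ ∈ R := S.2.2.1 (S.2.2.2 x hxS w₀ hws)
        exact Or.inr ⟨⟨w₀, mem_nbr.mpr ⟨hw₀R, hadj⟩⟩, Finset.mem_attach _ _, hxS, hxb⟩
    · -- right inverse
      intro f
      funext w
      apply Subtype.ext
      ext x
      simp only [Finset.mem_filter, Finset.mem_insert, Finset.mem_biUnion]
      constructor
      · rintro ⟨rfl | ⟨w', _, hxw'⟩, hxb⟩
        · exact absurd hxb (not_mem_branch_self hT x ↑w)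
        · rcases (f w').2 with hemp | hcl
          · rw [hemp] at hxw'; exact absurd hxw' (Finset.notMem_empty x)
          have hxb' : x ∈ branch hT v ↑w' := (mem_brFil.mp (hcl.2.1 hxw')).2
          have : (w' : V) = ↑w := branch_disjoint hT (hadjs w') (hadjs w) hxb' hxb
          rwa [Subtype.ext this] at hxw'
      · intro hxf
        rcases (f w).2 with hemp | hcl
        · rw [hemp] at hxf; exact absurd hxf (Finset.notMem_empty x)
        exact ⟨Or.inr ⟨w, Finset.mem_attach _ _, hxf⟩, (mem_brFil.mp (hcl.2.1 hxf)).2⟩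
  calc cnt hT v R = Nat.card (∀ w : ↥s, {S : Finset V // S = ∅ ∨ closedIn hT w (brFil hT R v ↑w) S}) :=
        Nat.card_congr e
    _ = ∏ w : ↥s, Nat.card {S : Finset V // S = ∅ ∨ closedIn hT w (brFil hT R v ↑w) S} :=
        Nat.card_pi
    _ = ∏ w : ↥s, (1 + cnt hT ↑w (brFil hT R v ↑w)) := by
        refine Finset.prod_congr rfl fun w _ => ?_
        exact card_optClosed hT ↑w (brFil hT R v ↑w)
    _ = ∏ w ∈ s, (1 + cnt hT w (brFil hT R v w)) :=
        Finset.prod_coe_sort s (fun x => 1 + cnt hT x (brFil hT R v x))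

end TreeAux3

namespace TreeAux4
open TreeAux TreeAux2 TreeAux3

variable {V : Type*} {T : SimpleGraph V}

lemma nbr_root_branch (hT : T.IsTree) {v w : V} {R : Finset V} (hw : w ∈ nbr T v R) :
    nbr T w (brFil hT R v w) = (nbr T w R).erase v := by
  obtain ⟨hwR, hadj⟩ := mem_nbr.mp hw
  ext z
  simp only [Finset.mem_erase, mem_nbr, mem_brFil]
  constructor
  · rintro ⟨⟨hzR, hzb⟩, hzadj⟩
    exact ⟨hzb.1, hzR, hzadj⟩
  · rintro ⟨hzv, hzR, hzadj⟩
    exact ⟨⟨hzR, branch_adj_root hT hadj hzadj hzv⟩, hzadj⟩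

lemma nbr_deep_branch (hT : T.IsTree) {v w x : V} {R : Finset V} (hw : w ∈ nbr T v R)
    (hx : x ∈ brFil hT R v w) (hxw : x ≠ w) :
    nbr T x (brFil hT R v w) = nbr T x R := by
  obtain ⟨hwR, hadj⟩ := mem_nbr.mp hw
  obtain ⟨hxR, hxb⟩ := mem_brFil.mp hx
  ext z
  simp only [mem_nbr, mem_brFil]
  constructor
  · rintro ⟨⟨hzR, _⟩, hzadj⟩
    exact ⟨hzR, hzadj⟩
  · rintro ⟨hzR, hzadj⟩
    exact ⟨⟨hzR, branch_adj_mem hT hadj hxb hxw hzadj⟩, hzadj⟩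

lemma region_eq_singleton (hT : T.IsTree) {v : V} {R : Finset V} (hvc : vclosed hT v R)
    (h : nbr T v R = ∅) : R = {v} := by
  rw [region_eq hT hvc, h]
  simp

lemma closedIn_singleton_iff (hT : T.IsTree) {v : V} {S : Finset V} :
    closedIn hT v {v} S ↔ S = {v} := by
  constructor
  · rintro ⟨hv, hsub, _⟩
    exact Finset.Subset.antisymm hsub (Finset.singleton_subset_iff.mpr hv)
  · rintro rfl
    refine ⟨Finset.mem_singleton_self v, le_refl _, ?_⟩
    intro x hx y hy
    rw [Finset.mem_singleton] at hx
    subst hx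
    rw [tpath_self hT] at hy
    simpa using hy

lemma cnt_singleton (hT : T.IsTree) (v : V) : cnt hT v {v} = 1 := by
  unfold cnt
  haveI : Unique {S : Finset V // closedIn hT v {v} S} := by
    refine ⟨⟨⟨{v}, (closedIn_singleton_iff hT).mpr rfl⟩⟩, ?_⟩
    rintro ⟨S, hS⟩
    exact Subtype.ext ((closedIn_singleton_iff hT).mp hS)
  exact Nat.card_unique

lemma key_arith {a b c₁ c₂ : ℕ} (ha : 1 ≤ a) (hb : 1 ≤ b) (h₁ : 3*a ≤ c₁ + 2)
    (h₂ : 3*b ≤ c₂ + 2) : 6*(a*b) ≤ (1+c₁)*(1+c₂) + 2 := by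
  obtain ⟨a', rfl⟩ : ∃ a', a = a'+1 := ⟨a-1, by omega⟩
  obtain ⟨b', rfl⟩ : ∃ b', b = b'+1 := ⟨b-1, by omega⟩
  nlinarith [Nat.zero_le (a'*b'), Nat.mul_le_mul h₁ h₂]

/-- Rooted-binary-tree structure of a region. -/
def BinReg (hT : T.IsTree) (v : V) (R : Finset V) : Prop :=
  vclosed hT v R ∧ ((nbr T v R).card = 0 ∨ (nbr T v R).card = 2) ∧
    ∀ x ∈ R, x ≠ v → (nbr T x R).card = 1 ∨ (nbr T x R).card = 3

lemma binReg_branch (hT : T.IsTree) {v w : V} {R : Finset V} (hb : BinReg hT v R)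
    (hw : w ∈ nbr T v R) : BinReg hT w (brFil hT R v w) := by
  obtain ⟨hvc, _, hdeg⟩ := hb
  obtain ⟨hwR, hadj⟩ := mem_nbr.mp hw
  refine ⟨vclosed_brFil hT hvc hw, ?_, ?_⟩
  · rw [nbr_root_branch hT hw, Finset.card_erase_of_mem (mem_nbr.mpr ⟨hvc.1, hadj.symm⟩)]
    rcases hdeg w hwR hadj.ne' with h | h <;> rw [h] <;> simp
  · intro x hx hxw
    rw [nbr_deep_branch hT hw hx hxw]
    have hxv : x ≠ v := by
      rintro rfl
      exact not_mem_branch_self hT x w (mem_brFil.mp hx).2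
    exact hdeg x (mem_brFil.mp hx).1 hxv

lemma lower_bound (hT : T.IsTree) : ∀ n (R : Finset V) (v : V), R.card = n →
    BinReg hT v R → ∃ k, R.card = 2*k+1 ∧ 3*2^k ≤ cnt hT v R + 2 := by
  intro n
  induction n using Nat.strong_induction_on with
  | _ n ih =>
    intro R v hcard hb
    obtain ⟨hvc, hroot, hdeg⟩ := hb
    rcases hroot with h0 | h2
    · -- leaf region
      have hRv : R = {v} := region_eq_singleton hT hvc (Finset.card_eq_zero.mp h0)
      subst hRv
      exact ⟨0, by simp, by rw [cnt_singleton hT]; norm_num⟩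
    · obtain ⟨w₁, w₂, hne, hpair⟩ := Finset.card_eq_two.mp h2
      have hw₁ : w₁ ∈ nbr T v R := by rw [hpair]; simp
      have hw₂ : w₂ ∈ nbr T v R := by rw [hpair]; simp
      set R₁ := brFil hT R v w₁ with hR₁
      set R₂ := brFil hT R v w₂ with hR₂
      have hprod : cnt hT v R = (1 + cnt hT w₁ R₁) * (1 + cnt hT w₂ R₂) := by
        rw [cnt_eq_prod hT hvc, hpair, Finset.prod_pair hne]
      have hcardR : R.card = 1 + R₁.card + R₂.card := by
        rw [card_region hT hvc, hpair, Finset.sum_pair hne, ← hR₁, ← hR₂]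
        omega
      have hc₁pos : 1 ≤ R₁.card := Finset.card_pos.mpr
        ⟨w₁, mem_brFil.mpr ⟨(mem_nbr.mp hw₁).1, self_mem_branch hT (mem_nbr.mp hw₁).2⟩⟩
      have hc₂pos : 1 ≤ R₂.card := Finset.card_pos.mpr
        ⟨w₂, mem_brFil.mpr ⟨(mem_nbr.mp hw₂).1, self_mem_branch hT (mem_nbr.mp hw₂).2⟩⟩
      obtain ⟨k₁, hk₁, hb₁⟩ := ih R₁.card (by omega) R₁ w₁ rfl
        (binReg_branch hT ⟨hvc, Or.inr h2, hdeg⟩ hw₁)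
      obtain ⟨k₂, hk₂, hb₂⟩ := ih R₂.card (by omega) R₂ w₂ rfl
        (binReg_branch hT ⟨hvc, Or.inr h2, hdeg⟩ hw₂)
      refine ⟨k₁ + k₂ + 1, by omega, ?_⟩
      have harith := key_arith (Nat.one_le_two_pow) (Nat.one_le_two_pow) hb₁ hb₂
      calc 3 * 2^(k₁+k₂+1) = 6 * (2^k₁ * 2^k₂) := by rw [pow_add, pow_add]; ring
        _ ≤ (1 + cnt hT w₁ R₁) * (1 + cnt hT w₂ R₂) + 2 := harith
        _ = cnt hT v R + 2 := by rw [hprod]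

end TreeAux4

namespace TreeAux5
open TreeAux TreeAux2 TreeAux3 TreeAux4

variable {V : Type*} {T : SimpleGraph V}

/-- Number of vertices of `R` at level `l` from `v`. -/
noncomputable def lvlCard (hT : T.IsTree) (v : V) (R : Finset V) (l : ℕ) : ℕ :=
  (R.filter (fun x => (tpath hT v x).length = l)).card

/-- Two-per-level binary region. -/
def TwoReg (hT : T.IsTree) (v : V) (R : Finset V) : Prop :=
  BinReg hT v R ∧ ∀ l, 1 ≤ l → lvlCard hT v R l ≤ 2

lemma lvl_branch_le (hT : T.IsTree) {v w : V} {R : Finset V} (hw : w ∈ nbr T v R) (l : ℕ) :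
    lvlCard hT w (brFil hT R v w) l ≤ lvlCard hT v R (l+1) := by
  obtain ⟨hwR, hadj⟩ := mem_nbr.mp hw
  apply Finset.card_le_card
  intro x hx
  rw [Finset.mem_filter] at hx ⊢
  obtain ⟨hxm, hxl⟩ := hx
  obtain ⟨hxR, hxb⟩ := mem_brFil.mp hxm
  refine ⟨hxR, ?_⟩
  rw [tpath_eq_cons hT hadj hxb, Walk.length_cons, hxl]

lemma upper_bound (hT : T.IsTree) : ∀ n (R : Finset V) (v : V), R.card = n →
    TwoReg hT v R → ∃ k, R.card = 2*k+1 ∧ cnt hT v R + 2 ≤ 3*2^k := by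
  intro n
  induction n using Nat.strong_induction_on with
  | _ n ih =>
    intro R v hcard htr
    obtain ⟨⟨hvc, hroot, hdeg⟩, hlvl⟩ := htr
    rcases hroot with h0 | h2
    · have hRv : R = {v} := region_eq_singleton hT hvc (Finset.card_eq_zero.mp h0)
      subst hRv
      exact ⟨0, by simp, by rw [cnt_singleton hT]; norm_num⟩
    · obtain ⟨w₁, w₂, hne, hpair⟩ := Finset.card_eq_two.mp h2
      -- main argument, assuming the branch at `wa` is degenerate
      have key : ∀ wa wb : V, wa ≠ wb → nbr T v R = {wa, wb} →
          (nbr T wa (brFil hT R v wa)).card = 0 →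
          ∃ k, R.card = 2*k+1 ∧ cnt hT v R + 2 ≤ 3*2^k := by
        intro wa wb hab hp hdeg0
        have hwa : wa ∈ nbr T v R := by rw [hp]; simp
        have hwb : wb ∈ nbr T v R := by rw [hp]; simp
        set Ra := brFil hT R v wa with hRa
        set Rb := brFil hT R v wb with hRb
        have hvca : vclosed hT wa Ra := vclosed_brFil hT hvc hwa
        have hRasingle : Ra = {wa} :=
          region_eq_singleton hT hvca (Finset.card_eq_zero.mp hdeg0)
        have hprod : cnt hT v R = (1 + cnt hT wa Ra) * (1 + cnt hT wb Rb) := by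
          rw [cnt_eq_prod hT hvc, hp, Finset.prod_pair hab]
        have hcardR : R.card = 1 + Ra.card + Rb.card := by
          rw [card_region hT hvc, hp, Finset.sum_pair hab, ← hRa, ← hRb]
          omega
        have hbpos : 1 ≤ Rb.card := Finset.card_pos.mpr
          ⟨wb, mem_brFil.mpr ⟨(mem_nbr.mp hwb).1, self_mem_branch hT (mem_nbr.mp hwb).2⟩⟩
        have hRacard : Ra.card = 1 := by rw [hRasingle]; simp
        have htrb : TwoReg hT wb Rb := by
          refine ⟨binReg_branch hT ⟨hvc, Or.inr h2, hdeg⟩ hwb, ?_⟩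
          intro l hl
          exact le_trans (lvl_branch_le hT hwb l) (hlvl (l+1) (by omega))
        obtain ⟨kb, hkb, hub⟩ := ih Rb.card (by omega) Rb wb rfl htrb
        refine ⟨kb + 1, by omega, ?_⟩
        have hca : cnt hT wa Ra = 1 := by rw [hRasingle, cnt_singleton hT]
        rw [hprod, hca]
        have : (2:ℕ)^(kb+1) = 2 * 2^kb := by rw [pow_succ]; ring
        rw [this]
        omega
      -- not both branches can have two children
      have hnotboth : (nbr T w₁ (brFil hT R v w₁)).card = 0 ∨
          (nbr T w₂ (brFil hT R v w₂)).card = 0 := by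
        have hw₁ : w₁ ∈ nbr T v R := by rw [hpair]; simp
        have hw₂ : w₂ ∈ nbr T v R := by rw [hpair]; simp
        have hb₁ := binReg_branch hT ⟨hvc, Or.inr h2, hdeg⟩ hw₁
        have hb₂ := binReg_branch hT ⟨hvc, Or.inr h2, hdeg⟩ hw₂
        by_contra hcon
        push_neg at hcon
        have hc₁ : (nbr T w₁ (brFil hT R v w₁)).card = 2 := (hb₁.2.1).resolve_left hcon.1
        have hc₂ : (nbr T w₂ (brFil hT R v w₂)).card = 2 := (hb₂.2.1).resolve_left hcon.2
        -- all these neighbors are at level 2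
        have hsub : ∀ w ∈ nbr T v R, nbr T w (brFil hT R v w) ⊆
            R.filter (fun x => (tpath hT v x).length = 2) := by
          intro w hw z hz
          obtain ⟨hwR, hadj⟩ := mem_nbr.mp hw
          obtain ⟨hzm, hzadj⟩ := mem_nbr.mp hz
          obtain ⟨hzR, hzb⟩ := mem_brFil.mp hzm
          rw [Finset.mem_filter]
          refine ⟨hzR, ?_⟩
          rw [tpath_eq_cons hT hadj hzb, Walk.length_cons, tpath_adj hT hzadj]
          simp
        have hdisj : Disjoint (nbr T w₁ (brFil hT R v w₁)) (nbr T w₂ (brFil hT R v w₂)) := by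
          rw [Finset.disjoint_left]
          intro z hz₁ hz₂
          have hzb₁ : z ∈ branch hT v w₁ := (mem_brFil.mp (mem_nbr.mp hz₁).1).2
          have hzb₂ : z ∈ branch hT v w₂ := (mem_brFil.mp (mem_nbr.mp hz₂).1).2
          exact hne (branch_disjoint hT (mem_nbr.mp hw₁).2 (mem_nbr.mp hw₂).2 hzb₁ hzb₂)
        have hcard4 : ((nbr T w₁ (brFil hT R v w₁)) ∪ (nbr T w₂ (brFil hT R v w₂))).card = 4 := by
          rw [Finset.card_union_of_disjoint hdisj, hc₁, hc₂]
        have hle : ((nbr T w₁ (brFil hT R v w₁)) ∪ (nbr T w₂ (brFil hT R v w₂))).card ≤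
            lvlCard hT v R 2 := by
          apply Finset.card_le_card
          intro z hz
          rcases Finset.mem_union.mp hz with h | h
          · exact hsub w₁ hw₁ h
          · exact hsub w₂ hw₂ h
        have h2lvl := hlvl 2 (by omega)
        unfold lvlCard at h2lvl hle
        omega
      rcases hnotboth with h | h
      · exact key w₁ w₂ hne hpair h
      · exact key w₂ w₁ hne.symm (by rw [hpair, Finset.pair_comm]) h

end TreeAux5

namespace TreeAux6
open TreeAux TreeAux2 TreeAux3 TreeAux4 TreeAux5

variable {V : Type*} {T : SimpleGraph V}

lemma reach_in_induce {S : Finset V} : ∀ {a b : V} (p : T.Walk a b),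
    (∀ y ∈ p.support, y ∈ S) → ∀ (ha : a ∈ S) (hb : b ∈ S),
    (T.induce (S : Set V)).Reachable ⟨a, ha⟩ ⟨b, hb⟩ := by
  intro a b p
  induction p with
  | nil => intro _ ha hb; rfl
  | @cons a c b h q ih =>
    intro hs ha hb
    have hc : c ∈ S := hs c (by simp)
    refine Reachable.trans (Adj.reachable ?_) (ih (fun y hy => hs y (by simp [hy])) hc hb)
    exact SimpleGraph.comap_adj.mpr h

lemma connected_iff_closedIn (hT : T.IsTree) (x : V) (S : Finset V) (hx : x ∈ S) :
    (T.induce (S : Set V)).Connected ↔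
      (∀ v ∈ S, ∀ y ∈ (tpath hT x v).support, y ∈ S) := by
  constructor
  · intro hconn v hv y hy
    obtain ⟨W⟩ := hconn.preconnected ⟨x, hx⟩ ⟨v, hv⟩
    set W' : T.Walk x v := W.map (SimpleGraph.Embedding.induce (S : Set V)).toHom with hW'
    have hsupp : ∀ z ∈ W'.support, z ∈ S := by
      rw [hW']
      intro z hz
      replace hz : z ∈ (W.map (SimpleGraph.Embedding.induce (S : Set V)).toHom).support := hz
      rw [Walk.support_map, List.mem_map] at hz
      obtain ⟨⟨z', hz'⟩, _, rfl⟩ := hz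
      exact hz'
    have hbp : W'.bypass.IsPath := Walk.bypass_isPath W'
    have heq := tpath_unique hT W'.bypass hbp
    rw [← heq] at hy
    exact hsupp y (Walk.support_bypass_subset W' hy)
  · intro hcl
    have hpre : (T.induce (S : Set V)).Preconnected := by
      rintro ⟨a, ha⟩ ⟨b, hb⟩
      have r₁ := reach_in_induce (tpath hT x a) (hcl a ha) hx ha
      have r₂ := reach_in_induce (tpath hT x b) (hcl b hb) hx hb
      exact r₁.symm.trans r₂
    haveI : Nonempty (S : Set V) := ⟨⟨x, Finset.mem_coe.mpr hx⟩⟩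
    exact Connected.mk hpre

lemma numSubtrees_eq_cnt [Fintype V] (hT : T.IsTree) (r : V) :
    numSubtrees T r = cnt hT r Finset.univ := by
  unfold numSubtrees cnt
  rw [← Nat.card_coe_set_eq]
  apply Nat.card_congr
  apply Equiv.subtypeEquivRight
  intro S
  simp only [Set.mem_setOf_eq]
  constructor
  · rintro ⟨hx, hconn⟩
    exact ⟨hx, Finset.subset_univ S,
      (connected_iff_closedIn hT r S hx).mp hconn⟩
  · rintro ⟨hx, _, hcl⟩
    exact ⟨hx, (connected_iff_closedIn hT r S hx).mpr hcl⟩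

lemma nbr_univ [Fintype V] [DecidableRel T.Adj] (x : V) :
    nbr T x Finset.univ = T.neighborFinset x := by
  ext z
  simp [mem_nbr]

lemma binReg_univ [Fintype V] [DecidableRel T.Adj] {r : V}
    (h : IsRootedBinaryTree T r) : BinReg h.1 r Finset.univ := by
  obtain ⟨hT, hroot, hdeg⟩ := h
  refine ⟨⟨Finset.mem_univ r, fun _ _ y _ => Finset.mem_univ y⟩, ?_, ?_⟩
  · rcases hroot with h1 | h2
    · left
      rw [nbr_univ, Finset.card_eq_zero, Finset.eq_empty_iff_forall_notMem]
      intro z hz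
      rw [SimpleGraph.mem_neighborFinset] at hz
      obtain ⟨y, hy⟩ := Fintype.card_eq_one_iff.mp h1
      exact hz.ne ((hy r).trans (hy z).symm)
    · right
      rw [nbr_univ]
      exact h2
  · intro x _ hxr
    rw [nbr_univ]
    exact hdeg x hxr

lemma lvl_univ [Fintype V] (hT : T.IsTree) (r : V) (l : ℕ) :
    lvlCard hT r Finset.univ l =
      (Finset.univ.filter (fun x => T.dist r x = l)).card := by
  unfold lvlCard
  apply congrArg Finset.card
  ext x
  simp [tpath_length hT]

end TreeAux6


/-- Among all rooted binary trees on `n` vertices, the tree `T_{r,2}^n` having exactly two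
vertices at every level `≥ 1` minimizes the number of subtrees containing the root. -/
theorem two_per_level_minimizes_root_subtrees {V₁ V₂ : Type*} [Fintype V₁] [Fintype V₂]
    (G₁ : SimpleGraph V₁) (G₂ : SimpleGraph V₂) [DecidableRel G₁.Adj] [DecidableRel G₂.Adj]
    (r₁ : V₁) (r₂ : V₂)
    (h₁ : IsRootedBinaryTree G₁ r₁) (h₂ : IsRootedBinaryTree G₂ r₂)
    (hcard : Fintype.card V₁ = Fintype.card V₂)
    (hlevels : ∀ l : ℕ, 1 ≤ l → l ≤ treeHeight G₁ r₁ →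
      (Finset.univ.filter (fun v => G₁.dist r₁ v = l)).card = 2) :
    numSubtrees G₁ r₁ ≤ numSubtrees G₂ r₂ := by
  have hT₁ := h₁.1
  have hT₂ := h₂.1
  have htwo : TreeAux5.TwoReg hT₁ r₁ Finset.univ := by
    refine ⟨TreeAux6.binReg_univ h₁, ?_⟩
    intro l hl
    rw [TreeAux6.lvl_univ hT₁ r₁ l]
    by_cases hle : l ≤ treeHeight G₁ r₁
    · rw [hlevels l hl hle]
    · have : (Finset.univ.filter (fun x => G₁.dist r₁ x = l)) = ∅ := by
        rw [Finset.filter_eq_empty_iff]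
        intro x _
        intro hdist
        exact hle (hdist ▸ Finset.le_sup (Finset.mem_univ x))
      rw [this]
      simp
  obtain ⟨k₁, hk₁, hu⟩ := TreeAux5.upper_bound hT₁ _ Finset.univ r₁ rfl htwo
  obtain ⟨k₂, hk₂, hl⟩ := TreeAux4.lower_bound hT₂ _ Finset.univ r₂ rfl (TreeAux6.binReg_univ h₂)
  rw [Finset.card_univ] at hk₁ hk₂
  have hkk : k₁ = k₂ := by omega
  subst hkk
  rw [TreeAux6.numSubtrees_eq_cnt hT₁ r₁, TreeAux6.numSubtrees_eq_cnt hT₂ r₂]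
  exact Nat.le_of_add_le_add_right (le_trans hu hl)
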